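/- Fix ν_sep > 1 and define f(ν) = ν_sep·(arcoth(ν) − arcoth(ν_sep))/ln(2) + (1/2)·log2((ν²−1)/(ν_sep²−1)) for ν ∈ (1, ν_sep]. Then f(ν_sep) = 0, f is strictly decreasing on (1, ν_sep], f(ν) > 0 for ν < ν_sep, and f(ν) → +∞ as ν → 1⁺. -/

import Mathlib

open Filter Set

/-- Inverse hyperbolic cotangent: `arcoth(x) = (1/2)·ln((x+1)/(x−1))` for `x > 1`. -/
noncomputable def arcoth (x : ℝ) : ℝ := (1 / 2) * Real.log ((x + 1) / (x - 1))

/-- Properties of the closed-form error-exponent bound for the thermal attenuator/amplifier: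
with `f(ν) = ν_sep·(arcoth ν − arcoth ν_sep)/ln 2 + (1/2)·log₂((ν²−1)/(ν_sep²−1))` on
`(1, ν_sep]`, one has `f(ν_sep) = 0`, `f` is strictly decreasing on `(1, ν_sep]`,
`f(ν) > 0` for `ν ∈ (1, ν_sep)`, and `f(ν) → +∞` as `ν → 1⁺`. -/
theorem thermal_bound_properties (νsep : ℝ) (hνsep : 1 < νsep) (f : ℝ → ℝ)
    (hf : ∀ ν, f ν = νsep * (arcoth ν - arcoth νsep) / Real.log 2
        + (1 / 2) * Real.logb 2 ((ν ^ 2 - 1) / (νsep ^ 2 - 1))) :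
    f νsep = 0 ∧
    StrictAntiOn f (Set.Ioc 1 νsep) ∧
    (∀ ν ∈ Set.Ioo 1 νsep, 0 < f ν) ∧
    Tendsto f (nhdsWithin 1 (Set.Ioi 1)) atTop := by
  have hL : 0 < Real.log 2 := Real.log_pos one_lt_two
  have hD : 0 < νsep ^ 2 - 1 := by nlinarith
  set L := Real.log 2 with hLdef
  set A : ℝ := (1 - νsep) / (2 * L) with hA
  set B : ℝ := (1 + νsep) / (2 * L) with hB
  set C : ℝ := -(νsep * arcoth νsep) / L - Real.log (νsep ^ 2 - 1) / (2 * L) with hC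
  set g : ℝ → ℝ := fun ν => A * Real.log (ν - 1) + B * Real.log (ν + 1) + C with hg
  have key : ∀ ν : ℝ, 1 < ν → f ν = g ν := by
    intro ν hν
    have h1 : (0:ℝ) < ν - 1 := by linarith
    have h2 : (0:ℝ) < ν + 1 := by linarith
    have hν2 : ν ^ 2 - 1 = (ν - 1) * (ν + 1) := by ring
    have harc : arcoth ν = (1 / 2) * (Real.log (ν + 1) - Real.log (ν - 1)) := by
      rw [arcoth, Real.log_div h2.ne' h1.ne']
    have hlogb : Real.logb 2 ((ν ^ 2 - 1) / (νsep ^ 2 - 1))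
        = (Real.log (ν - 1) + Real.log (ν + 1) - Real.log (νsep ^ 2 - 1)) / L := by
      rw [Real.logb, Real.log_div (by nlinarith : (ν ^ 2 - 1 : ℝ)  ≠ 0) hD.ne', hν2, Real.log_mul h1.ne' h2.ne']
    rw [hf, hg, harc, hlogb, hA, hB, hC]
    field_simp
    ring
  have hd : ∀ x : ℝ, 1 < x →
      HasDerivAt (fun ν => A * Real.log (ν - 1) + B * Real.log (ν + 1) + C)
        (A / (x - 1) + B / (x + 1)) x := by
    intro x hx
    have h1 : (0:ℝ) < x - 1 := by linarith
    have h2 : (0:ℝ) < x + 1 := by linarith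
    have d1 : HasDerivAt (fun ν : ℝ => Real.log (ν - 1)) ((x - 1)⁻¹ * 1) x :=
      by have := (Real.hasDerivAt_log h1.ne').comp x ((hasDerivAt_id x).sub_const 1); exact this
    have d2 : HasDerivAt (fun ν : ℝ => Real.log (ν + 1)) ((x + 1)⁻¹ * 1) x :=
      by have := (Real.hasDerivAt_log h2.ne').comp x ((hasDerivAt_id x).add_const 1); exact this
    have := ((HasDerivAt.const_mul A d1).add (HasDerivAt.const_mul B d2)).add_const C
    exact this.congr_deriv (by ring)
  have hanti_g : StrictAntiOn g (Set.Ioc 1 νsep) := by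
    apply strictAntiOn_of_deriv_neg (convex_Ioc 1 νsep)
    · intro x hx
      exact (hg ▸ (hd x hx.1)).continuousAt.continuousWithinAt
    · intro x hx
      rw [interior_Ioc] at hx
      have h1 : (0:ℝ) < x - 1 := by linarith [hx.1]
      have h2 : (0:ℝ) < x + 1 := by linarith [hx.1]
      rw [(hg ▸ (hd x hx.1) : HasDerivAt g _ x).deriv]
      have : A / (x - 1) + B / (x + 1) = (x - νsep) / (L * ((x - 1) * (x + 1))) := by
        rw [hA, hB]; field_simp; ring
      rw [this]
      apply div_neg_of_neg_of_pos
      · linarith [hx.2]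
      · positivity
  have hanti : StrictAntiOn f (Set.Ioc 1 νsep) := by
    intro a ha b hb hab
    rw [key a ha.1, key b hb.1]
    exact hanti_g ha hb hab
  have hfsep : f νsep = 0 := by
    rw [hf]
    rw [div_self hD.ne']
    simp [Real.logb]
  refine ⟨hfsep, hanti, ?_, ?_⟩
  · intro ν hν
    have := hanti ⟨hν.1, hν.2.le⟩ ⟨hνsep, le_refl _⟩ hν.2
    rw [hfsep] at this
    linarith
  · have heq : f =ᶠ[nhdsWithin 1 (Set.Ioi 1)] g := by
      filter_upwards [self_mem_nhdsWithin] with ν hν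
      exact key ν hν
    rw [tendsto_congr' heq]
    have hlog1 : Tendsto (fun ν : ℝ => Real.log (ν - 1)) (nhdsWithin 1 (Set.Ioi 1)) atBot := by
      apply Real.tendsto_log_nhdsGT_zero.comp
      rw [tendsto_nhdsWithin_iff]
      constructor
      · have hc : Continuous fun ν : ℝ => ν - 1 := by fun_prop
        have : Tendsto (fun ν : ℝ => ν - 1) (nhds 1) (nhds 0) := by
          simpa using hc.tendsto 1
        exact this.mono_left nhdsWithin_le_nhds
      · filter_upwards [self_mem_nhdsWithin] with ν hν
        simp only [Set.mem_Ioi] at hν ⊢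
        linarith
    have hAneg : A < 0 := by
      rw [hA]
      apply div_neg_of_neg_of_pos <;> [linarith; positivity]
    have h1 : Tendsto (fun ν : ℝ => A * Real.log (ν - 1)) (nhdsWithin 1 (Set.Ioi 1)) atTop :=
      (tendsto_const_mul_atTop_of_neg hAneg).2 hlog1
    have h2 : Tendsto (fun ν : ℝ => B * Real.log (ν + 1) + C) (nhdsWithin 1 (Set.Ioi 1))
        (nhds (B * Real.log 2 + C)) := by
      apply Tendsto.add _ tendsto_const_nhds
      apply Tendsto.const_mul
      have hc : Continuous fun ν : ℝ => ν + 1 := by fun_prop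
      have hc1 : Tendsto (fun ν : ℝ => ν + 1) (nhds 1) (nhds 2) := by
        simpa [one_add_one_eq_two] using hc.tendsto 1
      have := (Real.continuousAt_log (by norm_num : (2:ℝ) ≠ 0)).tendsto
      exact (this.comp hc1).mono_left nhdsWithin_le_nhds
    simpa [hg, add_assoc] using h1.atTop_add h2
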